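/- arXiv:1105.6075 — 2 statements merged into one kernel-verified Lean document; each statement's English description precedes it below -/
import Mathlib

section
/- Let G be an acyclic directed mixed graph with heads H_1, …, H_k (all of them) and tails T_i = tail_G(H_i), and margins M_i = H_i ∪ T_i. Then there exists an enumeration of the heads such that the resulting ordering of margins is hierarchical: for all indices i < j, M_j is not a subset of M_i, and moreover every effect L with H_j ⊆ L ⊆ M_j satisfies L ⊄ M_i (L is not a subset of M_i). In particular, any enumeration of the heads extending the strict partial order H_i ≺ H_j ⟺ (H_i ⊆ an_G(H_j) and H_i ≠ H_j) has this property. -/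
open Finset

open scoped Classical

variable {V : Type} [Fintype V] [DecidableEq V]

/-- An acyclic directed mixed graph (ADMG): directed edges `dir` and a symmetric
irreflexive set of bidirected edges `bi`, with no directed cycle. -/
structure ADMG (V : Type) [Fintype V] [DecidableEq V] where
  dir : V → V → Prop
  bi : V → V → Prop
  bi_symm : ∀ {v w}, bi v w → bi w v
  bi_irrefl : ∀ v, ¬ bi v v
  acyclic : ∀ v, ¬ Relation.TransGen dir v v

namespace ADMG

/-- Ancestors of (members of) `A`: vertices `w` with `w = a` or a directed path `w → ⋯ → a`
for some `a ∈ A`. -/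
noncomputable def anc (G : ADMG V) (A : Finset V) : Finset V :=
  univ.filter fun w => ∃ a ∈ A, Relation.ReflTransGen G.dir w a

/-- Descendants of (members of) `A`. -/
noncomputable def dec (G : ADMG V) (A : Finset V) : Finset V :=
  univ.filter fun w => ∃ a ∈ A, Relation.ReflTransGen G.dir a w

/-- Parents of (members of) `A`. -/
noncomputable def pa (G : ADMG V) (A : Finset V) : Finset V :=
  univ.filter fun w => ∃ a ∈ A, G.dir w a

/-- `barren_G(U)`: members of `U` with no non-trivial descendant in `U`. -/
noncomputable def barren (G : ADMG V) (U : Finset V) : Finset V :=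
  U.filter fun v => G.dec {v} ∩ U = {v}

/-- `U` is barren if `barren_G(U) = U`. -/
def IsBarren (G : ADMG V) (U : Finset V) : Prop := G.barren U = U

/-- One bidirected step inside the induced subgraph `G_S`. -/
def biStep (G : ADMG V) (S : Finset V) (u w : V) : Prop :=
  u ∈ S ∧ w ∈ S ∧ G.bi u w

/-- District of (members of) `A` in the induced subgraph `G_S`: vertices joined to a member
of `A` by a (possibly empty) bidirected path within `S`. -/
noncomputable def disIn (G : ADMG V) (S A : Finset V) : Finset V :=
  univ.filter fun w => ∃ a ∈ A, a ∈ S ∧ w ∈ S ∧ Relation.ReflTransGen (G.biStep S) a w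

/-- District in the whole graph. -/
noncomputable def dis (G : ADMG V) (A : Finset V) : Finset V := G.disIn univ A

/-- A head: a nonempty barren set connected by bidirected paths in `G_{an_G(H)}`. -/
def IsHead (G : ADMG V) (H : Finset V) : Prop :=
  H.Nonempty ∧ G.IsBarren H ∧
    ∀ a ∈ H, ∀ b ∈ H, Relation.ReflTransGen (G.biStep (G.anc H)) a b

/-- The tail of a head: `tail_G(H) = pa_G(D) ∪ (D ∖ H)` where `D = dis_{G_{an(H)}}(H)`. -/
noncomputable def tail (G : ADMG V) (H : Finset V) : Finset V :=
  G.pa (G.disIn (G.anc H) H) ∪ (G.disIn (G.anc H) H \ H)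

end ADMG

/-- `Gbar` is a head-preserving completion of `G`: a complete supergraph (on the same
vertices) in which every head of `G` is still a head. -/
def IsHPC (G Gbar : ADMG V) : Prop :=
  (∀ v w, G.dir v w → Gbar.dir v w) ∧
  (∀ v w, G.bi v w → Gbar.bi v w) ∧
  (∀ v w : V, v ≠ w → Gbar.dir v w ∨ Gbar.dir w v ∨ Gbar.bi v w) ∧
  (∀ H : Finset V, G.IsHead H → Gbar.IsHead H)

/-- Type of an edge on a path, read from left to right:
`u → w`, `u ← w`, or `u ↔ w`. -/
inductive EdgeType : Type
  | toRight
  | toLeft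
  | biE

/-- The edge of the given type is present in `G` between `u` (left) and `w` (right). -/
def edgeOK (G : ADMG V) : EdgeType → V → V → Prop
  | .toRight, u, w => G.dir u w
  | .toLeft,  u, w => G.dir w u
  | .biE,     u, w => G.bi u w

/-- The edge has an arrowhead at its right endpoint. -/
def arrowAtRight : EdgeType → Prop
  | .toRight => True
  | .toLeft  => False
  | .biE     => True

/-- The edge has an arrowhead at its left endpoint. -/
def arrowAtLeft : EdgeType → Prop
  | .toRight => False
  | .toLeft  => True
  | .biE     => True

/-- A path from `x` to `y` in the mixed graph `G`: distinct vertices `f 0, …, f n`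
joined by edges of the recorded types. -/
structure GPath (G : ADMG V) (x y : V) where
  n : ℕ
  f : Fin (n + 1) → V
  inj : Function.Injective f
  first : f 0 = x
  last : f (Fin.last n) = y
  e : Fin n → EdgeType
  ok : ∀ i : Fin n, edgeOK G (e i) (f i.castSucc) (f i.succ)

/-- The interior vertex `f (i+1)` is a collider on the path: both incident edges
have an arrowhead at it. -/
def GPath.colliderAt {G : ADMG V} {x y : V} (w : GPath G x y)
    (i : ℕ) (h : i + 1 < w.n) : Prop :=
  arrowAtRight (w.e ⟨i, by omega⟩) ∧ arrowAtLeft (w.e ⟨i + 1, h⟩)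

/-- The path is blocked by `C`: some interior non-collider is in `C`, or some interior
collider is outside `an_G(C)`. -/
def GPath.Blocked {G : ADMG V} {x y : V} (w : GPath G x y) (C : Finset V) : Prop :=
  ∃ (i : ℕ) (h : i + 1 < w.n),
    (¬ w.colliderAt i h ∧ w.f ⟨i + 1, by omega⟩ ∈ C) ∨
    (w.colliderAt i h ∧ w.f ⟨i + 1, by omega⟩ ∉ G.anc C)

/-- m-separation of `A` and `B` given `C` in `G`. -/
def MSep (G : ADMG V) (A B C : Finset V) : Prop :=
  ∀ a ∈ A, ∀ b ∈ B, ∀ w : GPath G a b, w.Blocked C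

/-- The enumeration `e` of the heads of `G` yields a hierarchical ordering of the
margins `M i = e i ∪ tail_G(e i)`: for `i < j`, `M j ⊄ M i`, and no effect `L`
with `e j ⊆ L ⊆ M j` is a subset of `M i`. -/
def Hierarchical (G : ADMG V) {k : ℕ} (e : Fin k → Finset V) : Prop :=
  ∀ i j : Fin k, i < j →
    (¬ (e j ∪ G.tail (e j)) ⊆ (e i ∪ G.tail (e i))) ∧
    ∀ L : Finset V, e j ⊆ L → L ⊆ e j ∪ G.tail (e j) →
      ¬ L ⊆ e i ∪ G.tail (e i)

private lemma mem_anc_iff (G : ADMG V) (A : Finset V) (w : V) :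
    w ∈ G.anc A ↔ ∃ a ∈ A, Relation.ReflTransGen G.dir w a := by
  simp [ADMG.anc]

private lemma subset_anc_self (G : ADMG V) (A : Finset V) : A ⊆ G.anc A := by
  intro a ha
  exact (mem_anc_iff G A a).mpr ⟨a, ha, Relation.ReflTransGen.refl⟩

private lemma anc_trans (G : ADMG V) {A B : Finset V} (h : A ⊆ G.anc B) :
    G.anc A ⊆ G.anc B := by
  intro w hw
  obtain ⟨a, ha, hwa⟩ := (mem_anc_iff G A w).mp hw
  obtain ⟨b, hb, hab⟩ := (mem_anc_iff G B a).mp (h ha)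
  exact (mem_anc_iff G B w).mpr ⟨b, hb, hwa.trans hab⟩

private lemma tail_subset_anc (G : ADMG V) (H : Finset V) : G.tail H ⊆ G.anc H := by
  intro w hw
  have hD : ∀ x ∈ G.disIn (G.anc H) H, x ∈ G.anc H := by
    intro x hx
    simp only [ADMG.disIn, mem_filter, mem_univ, true_and] at hx
    obtain ⟨a, _, _, hxS, _⟩ := hx
    exact hxS
  rcases Finset.mem_union.mp hw with hw | hw
  · simp only [ADMG.pa, mem_filter, mem_univ, true_and] at hw
    obtain ⟨a, haD, hwa⟩ := hw
    obtain ⟨b, hb, hab⟩ := (mem_anc_iff G H a).mp (hD a haD)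
    exact (mem_anc_iff G H w).mpr ⟨b, hb, Relation.ReflTransGen.head hwa hab⟩
  · exact hD w (Finset.mem_sdiff.mp hw).1

private lemma margin_subset_anc (G : ADMG V) (H : Finset V) :
    H ∪ G.tail H ⊆ G.anc H :=
  Finset.union_subset (subset_anc_self G H) (tail_subset_anc G H)

private lemma rtg_antisymm (G : ADMG V) {a b : V}
    (h1 : Relation.ReflTransGen G.dir a b)
    (h2 : Relation.ReflTransGen G.dir b a) : a = b := by
  by_contra hne
  rcases (Relation.reflTransGen_iff_eq_or_transGen).mp h1 with h | h
  · exact hne h.symm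
  · exact G.acyclic a (h.trans_left h2)

private lemma barren_eq (G : ADMG V) {H : Finset V} (hb : G.IsBarren H)
    {h x : V} (hh : h ∈ H) (hx : x ∈ H) (hpath : Relation.ReflTransGen G.dir h x) :
    x = h := by
  have hh' : h ∈ G.barren H := hb.symm ▸ hh
  simp only [ADMG.barren, mem_filter] at hh'
  have hxd : x ∈ G.dec {h} ∩ H := by
    refine Finset.mem_inter.mpr ⟨?_, hx⟩
    simp only [ADMG.dec, mem_filter, mem_univ, true_and]
    exact ⟨h, Finset.mem_singleton_self h, hpath⟩
  rw [hh'.2] at hxd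
  exact Finset.mem_singleton.mp hxd

private lemma head_antisymm (G : ADMG V) {H H' : Finset V}
    (hH : G.IsHead H) (hH' : G.IsHead H')
    (h1 : H ⊆ G.anc H') (h2 : H' ⊆ G.anc H) : H = H' := by
  have aux : ∀ (A B : Finset V), G.IsBarren A → A ⊆ G.anc B → B ⊆ G.anc A → A ⊆ B := by
    intro A B hbA hAB hBA
    intro h hh
    obtain ⟨h', hh', hhp⟩ := (mem_anc_iff G B h).mp (hAB hh)
    obtain ⟨h'', hh'', hhp'⟩ := (mem_anc_iff G A h').mp (hBA hh')
    have heq : h'' = h := barren_eq G hbA hh hh'' (hhp.trans hhp')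
    rw [heq] at hhp'
    have heq2 : h = h' := rtg_antisymm G hhp hhp'
    exact heq2 ▸ hh'
  exact Finset.Subset.antisymm (aux H H' hH.2.1 h1 h2) (aux H' H hH'.2.1 h2 h1)

private lemma anc_card_lt (G : ADMG V) {H H' : Finset V}
    (hH : G.IsHead H) (hH' : G.IsHead H') (hsub : H ⊆ G.anc H') (hne : H ≠ H') :
    (G.anc H).card < (G.anc H').card := by
  have hsubset : G.anc H ⊆ G.anc H' := anc_trans G hsub
  have hne' : G.anc H ≠ G.anc H' := by
    intro heq
    exact hne (head_antisymm G hH hH' hsub (heq ▸ subset_anc_self G H'))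
  exact Finset.card_lt_card (hsubset.ssubset_of_ne hne')

private lemma hier_of_ext (G : ADMG V) (k : ℕ) (e : Fin k → Finset V)
    (hinj : Function.Injective e) (_hall : ∀ H : Finset V, G.IsHead H ↔ ∃ i, e i = H)
    (hext : ∀ i j : Fin k, e i ⊆ G.anc (e j) → e i ≠ e j → i < j) :
    Hierarchical G e := by
  intro i j hij
  have key : ∀ L : Finset V, e j ⊆ L → ¬ L ⊆ e i ∪ G.tail (e i) := by
    intro L hjL hLMi
    have hsub : e j ⊆ G.anc (e i) := fun x hx => margin_subset_anc G (e i) (hLMi (hjL hx))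
    have hne : e j ≠ e i := fun h => absurd (hinj h) (Fin.ne_of_gt hij)
    exact absurd (hext j i hsub hne) (not_lt.mpr hij.le)
  exact ⟨key _ Finset.subset_union_left, fun L hL _ => key L hL⟩

/-- there is an enumeration of all heads of `G` whose margin ordering is
hierarchical; in particular, any enumeration extending the strict partial order
`H ≺ H' ⟺ H ⊆ an_G(H') ∧ H ≠ H'` is hierarchical. -/
theorem exists_hierarchical_ordering (G : ADMG V) :
    (∃ (k : ℕ) (e : Fin k → Finset V),
        Function.Injective e ∧ (∀ H : Finset V, G.IsHead H ↔ ∃ i, e i = H) ∧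
        Hierarchical G e) ∧
    (∀ (k : ℕ) (e : Fin k → Finset V),
        Function.Injective e → (∀ H : Finset V, G.IsHead H ↔ ∃ i, e i = H) →
        (∀ i j : Fin k, e i ⊆ G.anc (e j) → e i ≠ e j → i < j) →
        Hierarchical G e) := by
  classical
  refine ⟨?_, fun k e hinj hall hext => hier_of_ext G k e hinj hall hext⟩
  -- build an enumeration sorted by ancestor-set cardinality (ties broken arbitrarily)
  set key : Finset V → ℕ := fun H => (G.anc H).card with hkey
  set idx : Finset V → ℕ := fun H => ((Fintype.equivFin (Finset V)) H : ℕ) with hidx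
  have idx_inj : Function.Injective idx := by
    intro a b hab
    have : ((Fintype.equivFin (Finset V)) a) = ((Fintype.equivFin (Finset V)) b) :=
      Fin.ext hab
    exact (Fintype.equivFin (Finset V)).injective this
  set r : Finset V → Finset V → Prop :=
    fun a b => key a < key b ∨ (key a = key b ∧ idx a ≤ idx b) with hr
  haveI : DecidableRel r := Classical.decRel r
  haveI : IsTrans (Finset V) r := by
    constructor
    intro a b c hab hbc
    rcases hab with h | ⟨h1, h2⟩ <;> rcases hbc with h' | ⟨h1', h2'⟩
    · exact Or.inl (h.trans h')
    · exact Or.inl (h1' ▸ h)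
    · exact Or.inl (h1 ▸ h')
    · exact Or.inr ⟨h1.trans h1', h2.trans h2'⟩
  haveI : IsAntisymm (Finset V) r := by
    constructor
    intro a b hab hba
    rcases hab with h | ⟨h1, h2⟩ <;> rcases hba with h' | ⟨h1', h2'⟩ <;>
      first
        | omega
        | exact idx_inj (le_antisymm h2 h2')
  haveI : IsTotal (Finset V) r := by
    constructor
    intro a b
    rcases lt_trichotomy (key a) (key b) with h | h | h
    · exact Or.inl (Or.inl h)
    · rcases le_total (idx a) (idx b) with h' | h'
      · exact Or.inl (Or.inr ⟨h, h'⟩)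
      · exact Or.inr (Or.inr ⟨h.symm, h'⟩)
    · exact Or.inr (Or.inl h)
  set S : Finset (Finset V) := Finset.univ.filter G.IsHead with hS
  set l : List (Finset V) := S.sort r with hl
  have hnodup : l.Nodup := Finset.sort_nodup (s := S) (r := r)
  have hmem : ∀ H : Finset V, H ∈ l ↔ G.IsHead H := by
    intro H
    rw [hl, Finset.mem_sort, hS, Finset.mem_filter]
    simp
  have hsorted : l.Pairwise r := Finset.pairwise_sort (s := S) (r := r)
  refine ⟨l.length, fun i => l.get i, ?_, ?_, ?_⟩
  · exact List.nodup_iff_injective_get.mp hnodup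
  · intro H
    rw [← hmem]
    exact List.mem_iff_get
  · apply hier_of_ext
    · exact List.nodup_iff_injective_get.mp hnodup
    · intro H
      rw [← hmem]
      exact List.mem_iff_get
    · intro i j hsub hne
      have hi : G.IsHead (l.get i) := (hmem _).mp (l.get_mem _)
      have hj : G.IsHead (l.get j) := (hmem _).mp (l.get_mem _)
      have hlt : key (l.get i) < key (l.get j) := anc_card_lt G hi hj hsub hne
      rcases lt_trichotomy i j with h | h | h
      · exact h
      · exact absurd (congrArg l.get h) hne
      · have := hsorted.rel_get_of_lt h
        rcases this with h' | ⟨h', _⟩ <;> omega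
end

section
/- Let G be an acyclic directed mixed graph on the finite vertex set V, and let X_v be finite state spaces of size at least 2. If p and q are strictly positive probability distributions on X_V that both satisfy the global Markov property for G, and if for every head H of G with tail T = tail_G(H), every L with H ⊆ L ⊆ H ∪ T and every x_L ∈ X_L the marginal log-linear parameters agree, λ_L^{H∪T}(x_L)[p] = λ_L^{H∪T}(x_L)[q], then p = q. That is, the ingenuous parameters determine the distribution within the model defined by the global Markov property for G. -/
open Finset

open scoped Classical

variable {V : Type} [Fintype V] [DecidableEq V]

/-- Joint state space: variable `v` takes values in `{0, …, d v + 1}`,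
so each state space has size `d v + 2 ≥ 2`. -/
abbrev Config (V : Type) (d : V → ℕ) : Type := ∀ v : V, Fin (d v + 2)

/-- Marginal `p_M` of `p` on the margin `M`, as a function of a full configuration
(it depends only on the coordinates in `M`). -/
noncomputable def margin (d : V → ℕ) (p : Config V d → ℝ) (M : Finset V)
    (x : Config V d) : ℝ :=
  ∑ y : Config V d, if ∀ v ∈ M, y v = x v then p y else 0

/-- Marginal log-linear parameter `λ_L^M(x_L)`:
`|X_M|⁻¹ ∑_{y_M ∈ X_M} log p_M(y_M) ∏_{v ∈ L} (|X_v|·1[x_v = y_v] − 1)`.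
The sum over `y_M ∈ X_M` is realized by summing over full configurations `y`
that are `0` outside `M` (one representative for each `y_M`). -/
noncomputable def mll (d : V → ℕ) (p : Config V d → ℝ) (L M : Finset V)
    (x : Config V d) : ℝ :=
  (∏ v ∈ M, ((d v + 2 : ℕ) : ℝ))⁻¹ *
    ∑ y : Config V d,
      if ∀ v ∉ M, y v = 0 then
        Real.log (margin d p M y) *
          ∏ v ∈ L, (((d v + 2 : ℕ) : ℝ) * (if x v = y v then 1 else 0) - 1)
      else 0

/-- Conditional independence `X_A ⊥ X_B | X_C [p]`:
`p_{A∪B∪C}(x) · p_C(x) = p_{A∪C}(x) · p_{B∪C}(x)` for all configurations. -/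
def CondIndep (d : V → ℕ) (p : Config V d → ℝ) (A B C : Finset V) : Prop :=
  ∀ x : Config V d,
    margin d p (A ∪ B ∪ C) x * margin d p C x
      = margin d p (A ∪ C) x * margin d p (B ∪ C) x

/-- The global Markov property: m-separation implies conditional independence. -/
def GlobalMarkov (G : ADMG V) (d : V → ℕ) (p : Config V d → ℝ) : Prop :=
  ∀ A B C : Finset V, Disjoint A B → Disjoint A C → Disjoint B C →
    MSep G A B C → CondIndep d p A B C

section AuxAnalysis

variable {d : V → ℕ}

noncomputable def fiberEquiv (S : Finset V) (y : Config V d) :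
    {z : Config V d // ∀ v ∈ S, y v = z v} ≃ (∀ v : {v : V // v ∉ S}, Fin (d v.1 + 2)) where
  toFun z v := z.1 v.1
  invFun g := ⟨fun v => if h : v ∈ S then y v else g ⟨v, h⟩, fun v hv => by simp [hv]⟩
  left_inv z := by
    apply Subtype.ext; funext v
    by_cases h : v ∈ S
    · simpa [dif_pos h] using (z.2 v h)
    · simp [dif_neg h]
  right_inv g := by funext v; simp [dif_neg v.2]

lemma card_fiber (S : Finset V) (y : Config V d) :
    (univ.filter fun z : Config V d => ∀ v ∈ S, y v = z v).card
      = ∏ v ∈ Sᶜ, (d v + 2) := by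
  classical
  have h1 : (univ.filter fun z : Config V d => ∀ v ∈ S, y v = z v).card
      = Fintype.card {z : Config V d // ∀ v ∈ S, y v = z v} := by
    rw [Fintype.card_subtype]
  rw [h1, Fintype.card_congr (fiberEquiv S y), Fintype.card_pi]
  simp only [Fintype.card_fin]
  exact (Finset.prod_subtype Sᶜ (fun v => Finset.mem_compl) fun v => d v + 2).symm

set_option linter.unusedSectionVars false in
lemma prodk_pos (S : Finset V) : (0:ℝ) < ∏ v ∈ S, ((d v + 2 : ℕ) : ℝ) :=
  Finset.prod_pos fun v _ => by exact_mod_cast Nat.succ_pos (d v + 1)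

lemma sum_margin_mul (p : Config V d → ℝ) (M : Finset V) (f : Config V d → ℝ)
    (hf : ∀ y z : Config V d, (∀ v ∈ M, y v = z v) → f y = f z) :
    ∑ x : Config V d, margin d p M x * f x
      = (∏ v ∈ Mᶜ, ((d v + 2 : ℕ) : ℝ)) * ∑ y : Config V d, p y * f y := by
  classical
  unfold margin
  simp only [Finset.sum_mul]
  rw [Finset.sum_comm]
  have step : ∀ y : Config V d,
      (∑ x : Config V d, (if ∀ v ∈ M, y v = x v then p y else 0) * f x)
        = (∏ v ∈ Mᶜ, ((d v + 2 : ℕ) : ℝ)) * (p y * f y) := by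
    intro y
    have h1 : ∀ x : Config V d, (if ∀ v ∈ M, y v = x v then p y else 0) * f x
        = (if ∀ v ∈ M, y v = x v then p y * f y else 0) := by
      intro x
      by_cases h : ∀ v ∈ M, y v = x v
      · rw [if_pos h, if_pos h, hf y x h]
      · rw [if_neg h, if_neg h, zero_mul]
    simp only [h1]
    rw [← Finset.sum_filter, Finset.sum_const, nsmul_eq_mul, card_fiber]
    push_cast
    ring
  rw [Finset.sum_congr rfl fun y _ => step y, ← Finset.mul_sum]

lemma margin_pos (p : Config V d → ℝ) (hp : ∀ x, 0 < p x) (M : Finset V) (x : Config V d) :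
    0 < margin d p M x := by
  unfold margin
  have hx : (if ∀ v ∈ M, x v = x v then p x else 0) = p x := if_pos (fun v _ => rfl)
  calc (0:ℝ) < p x := hp x
    _ = _ := hx.symm
    _ ≤ _ := Finset.single_le_sum
        (f := fun y => if ∀ v ∈ M, y v = x v then p y else 0)
        (fun y _ => by split_ifs with h; exacts [(hp y).le, le_rfl])
        (mem_univ x)

lemma margin_congr (p : Config V d → ℝ) (M : Finset V) {x x' : Config V d}
    (h : ∀ v ∈ M, x v = x' v) : margin d p M x = margin d p M x' := by
  unfold margin
  refine Finset.sum_congr rfl fun y _ => ?_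
  exact if_congr ⟨fun hy v hv => (hy v hv).trans (h v hv),
    fun hy v hv => (hy v hv).trans (h v hv).symm⟩ rfl rfl

lemma margin_empty (p : Config V d → ℝ) (x : Config V d) :
    margin d p ∅ x = ∑ y : Config V d, p y := by
  unfold margin; simp

lemma margin_univ (p : Config V d → ℝ) (x : Config V d) :
    margin d p univ x = p x := by
  unfold margin
  rw [Finset.sum_eq_single x]
  · exact if_pos fun v _ => rfl
  · intro y _ hy
    exact if_neg fun h => hy (funext fun v => h v (mem_univ v))
  · intro h; exact absurd (mem_univ x) h

lemma margin_subset (p q : Config V d → ℝ) {W A : Finset V} (hWA : W ⊆ A)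
    (h : margin d p A = margin d q A) (x : Config V d) :
    margin d p W x = margin d q W x := by
  classical
  set f : Config V d → ℝ := fun z => if ∀ v ∈ W, z v = x v then 1 else 0 with hfdef
  have hf : ∀ y z : Config V d, (∀ v ∈ A, y v = z v) → f y = f z := by
    intro y z hyz
    simp only [hfdef]
    exact if_congr ⟨fun hy v hv => (hyz v (hWA hv)).symm.trans (hy v hv),
      fun hy v hv => (hyz v (hWA hv)).trans (hy v hv)⟩ rfl rfl
  have hm : ∀ r : Config V d → ℝ, ∑ y : Config V d, r y * f y = margin d r W x := by
    intro r
    unfold margin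
    refine Finset.sum_congr rfl fun y _ => ?_
    simp only [hfdef]
    split_ifs <;> simp
  have key : (∏ v ∈ Aᶜ, ((d v + 2 : ℕ) : ℝ)) * margin d p W x
      = (∏ v ∈ Aᶜ, ((d v + 2 : ℕ) : ℝ)) * margin d q W x := by
    calc (∏ v ∈ Aᶜ, ((d v + 2 : ℕ) : ℝ)) * margin d p W x
        = (∏ v ∈ Aᶜ, ((d v + 2 : ℕ) : ℝ)) * ∑ y : Config V d, p y * f y := by rw [hm p]
      _ = ∑ x' : Config V d, margin d p A x' * f x' := (sum_margin_mul p A f hf).symm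
      _ = ∑ x' : Config V d, margin d q A x' * f x' := by rw [h]
      _ = (∏ v ∈ Aᶜ, ((d v + 2 : ℕ) : ℝ)) * ∑ y : Config V d, q y * f y := sum_margin_mul q A f hf
      _ = (∏ v ∈ Aᶜ, ((d v + 2 : ℕ) : ℝ)) * margin d q W x := by rw [hm q]
  exact mul_left_cancel₀ (ne_of_gt (prodk_pos Aᶜ)) key

end AuxAnalysis

section AuxFourier

variable {d : V → ℕ}

lemma mll_congr (p : Config V d → ℝ) (L M : Finset V) {x x' : Config V d}
    (h : ∀ v ∈ L, x v = x' v) : mll d p L M x = mll d p L M x' := by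
  unfold mll
  congr 1
  refine Finset.sum_congr rfl fun y _ => ?_
  refine if_congr Iff.rfl ?_ rfl
  congr 1
  refine Finset.prod_congr rfl fun v hv => ?_
  rw [h v hv]

lemma log_margin_eq_sum_mll (p : Config V d → ℝ) (M : Finset V) (x : Config V d) :
    Real.log (margin d p M x) = ∑ L ∈ M.powerset, mll d p L M x := by
  classical
  set c : ℝ := ∏ v ∈ M, ((d v + 2 : ℕ) : ℝ) with hc
  have hcpos : (0:ℝ) < c := prodk_pos M
  set y₀ : Config V d := fun v => if v ∈ M then x v else 0 with hy₀
  have key : ∑ L ∈ M.powerset, ∑ y : Config V d,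
      (if ∀ v ∉ M, y v = 0 then
        Real.log (margin d p M y) *
          ∏ v ∈ L, (((d v + 2 : ℕ) : ℝ) * (if x v = y v then 1 else 0) - 1)
      else 0) = c * Real.log (margin d p M x) := by
    rw [Finset.sum_comm]
    have inner : ∀ y : Config V d,
        (∑ L ∈ M.powerset, if ∀ v ∉ M, y v = 0 then
          Real.log (margin d p M y) *
            ∏ v ∈ L, (((d v + 2 : ℕ) : ℝ) * (if x v = y v then 1 else 0) - 1)
        else 0)
        = (if (∀ v ∉ M, y v = 0) ∧ (∀ v ∈ M, x v = y v)
            then c * Real.log (margin d p M y) else 0) := by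
      intro y
      by_cases hy : ∀ v ∉ M, y v = 0
      · simp only [if_pos hy, ← Finset.mul_sum]
        have hsum : (∑ L ∈ M.powerset,
            ∏ v ∈ L, (((d v + 2 : ℕ) : ℝ) * (if x v = y v then 1 else 0) - 1))
            = c * (if ∀ v ∈ M, x v = y v then 1 else 0) := by
          have hpa := Finset.prod_add
            (fun v => (((d v + 2 : ℕ) : ℝ) * (if x v = y v then 1 else 0) - 1))
            (fun _ => (1:ℝ)) M
          simp only [Finset.prod_const_one, mul_one, sub_add_cancel] at hpa
          rw [← hpa, Finset.prod_mul_distrib, ← hc, Finset.prod_boole]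
          congr 1
          apply ite_congr rfl (fun _ => rfl) (fun _ => rfl)
        rw [hsum]
        by_cases hxy : ∀ v ∈ M, x v = y v
        · rw [if_pos hxy, if_pos ⟨hy, hxy⟩, mul_one]; ring
        · rw [if_neg hxy, if_neg (fun h => hxy h.2), mul_zero, mul_zero]
      · simp only [if_neg hy, Finset.sum_const_zero]
        rw [if_neg (fun h => hy h.1)]
    rw [Finset.sum_congr rfl fun y _ => inner y]
    rw [Finset.sum_eq_single y₀]
    · have h1 : ∀ v ∉ M, y₀ v = 0 := fun v hv => by simp [hy₀, hv]
      have h2 : ∀ v ∈ M, x v = y₀ v := fun v hv => by simp [hy₀, hv]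
      rw [if_pos ⟨h1, h2⟩]
      exact congrArg (c * ·) (congrArg Real.log (margin_congr p M (fun v hv => (h2 v hv).symm)))
    · intro y _ hne
      rw [if_neg]
      rintro ⟨hA, hB⟩
      apply hne
      funext v
      by_cases hv : v ∈ M
      · rw [hy₀]; simp only [if_pos hv]; exact (hB v hv).symm
      · rw [hy₀]; simp only [if_neg hv]; exact hA v hv
    · intro h; exact absurd (mem_univ y₀) h
  unfold mll
  rw [← Finset.mul_sum, ← hc, key]
  rw [← mul_assoc, inv_mul_cancel₀ (ne_of_gt hcpos), one_mul]

lemma kl_term_nonneg {a b : ℝ} (ha : 0 < a) (hb : 0 < b) :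
    0 ≤ (a - b) * (Real.log a - Real.log b) := by
  rcases lt_trichotomy a b with hl | he | hl
  · have := Real.log_lt_log ha hl; nlinarith
  · simp [he]
  · have := Real.log_lt_log hb hl; nlinarith

lemma kl_term_eq {a b : ℝ} (ha : 0 < a) (hb : 0 < b)
    (h : (a - b) * (Real.log a - Real.log b) = 0) : a = b := by
  rcases lt_trichotomy a b with hl | he | hl
  · have := Real.log_lt_log ha hl; nlinarith
  · exact he
  · have := Real.log_lt_log hb hl; nlinarith

lemma interval_step (p q : Config V d → ℝ)
    (hppos : ∀ x, 0 < p x) (hqpos : ∀ x, 0 < q x)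
    (H M : Finset V)
    (hl : ∀ L : Finset V, H ⊆ L → L ⊆ M → ∀ x, mll d p L M x = mll d q L M x)
    (hmar : ∀ L : Finset V, L ⊆ M → ¬ H ⊆ L → margin d p L = margin d q L) :
    margin d p M = margin d q M := by
  classical
  set F : Config V d → ℝ :=
    fun x => Real.log (margin d p M x) - Real.log (margin d q M x) with hF
  have hFdep : ∀ y z : Config V d, (∀ v ∈ M, y v = z v) → F y = F z := by
    intro y z h; simp only [hF]; rw [margin_congr p M h, margin_congr q M h]
  have hzero : ∑ y : Config V d, (p y - q y) * F y = 0 := by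
    have hFx : ∀ x, F x = ∑ L ∈ M.powerset, (mll d p L M x - mll d q L M x) := by
      intro x
      simp only [hF]
      rw [log_margin_eq_sum_mll, log_margin_eq_sum_mll, Finset.sum_sub_distrib]
    calc ∑ y : Config V d, (p y - q y) * F y
        = ∑ y : Config V d, ∑ L ∈ M.powerset,
            (p y - q y) * (mll d p L M y - mll d q L M y) := by
          refine Finset.sum_congr rfl fun y _ => ?_
          rw [hFx, Finset.mul_sum]
      _ = ∑ L ∈ M.powerset, ∑ y : Config V d,
            (p y - q y) * (mll d p L M y - mll d q L M y) := Finset.sum_comm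
      _ = 0 := by
          apply Finset.sum_eq_zero
          intro L hL
          rw [Finset.mem_powerset] at hL
          by_cases hHL : H ⊆ L
          · apply Finset.sum_eq_zero
            intro y _
            rw [hl L hHL hL y, sub_self, mul_zero]
          · set g : Config V d → ℝ := fun y => mll d p L M y - mll d q L M y with hg
            have hdep : ∀ y z : Config V d, (∀ v ∈ L, y v = z v) → g y = g z := by
              intro y z h
              simp only [hg]
              rw [mll_congr p L M h, mll_congr q L M h]
            have h1 := sum_margin_mul p L g hdep
            have h2 := sum_margin_mul q L g hdep
            have h3 : (∏ v ∈ Lᶜ, ((d v + 2 : ℕ) : ℝ)) * ∑ y : Config V d, p y * g y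
                = (∏ v ∈ Lᶜ, ((d v + 2 : ℕ) : ℝ)) * ∑ y : Config V d, q y * g y := by
              rw [← h1, ← h2, hmar L hL hHL]
            have h4 : ∑ y : Config V d, p y * g y = ∑ y : Config V d, q y * g y :=
              mul_left_cancel₀ (ne_of_gt (prodk_pos Lᶜ)) h3
            calc ∑ y : Config V d, (p y - q y) * g y
                = ∑ y : Config V d, (p y * g y - q y * g y) := by
                  refine Finset.sum_congr rfl fun y _ => ?_; ring
              _ = 0 := by rw [Finset.sum_sub_distrib, h4, sub_self]
  have hpair : ∑ x : Config V d, (margin d p M x - margin d q M x) * F x = 0 := by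
    have h1 := sum_margin_mul p M F hFdep
    have h2 := sum_margin_mul q M F hFdep
    calc ∑ x : Config V d, (margin d p M x - margin d q M x) * F x
        = (∑ x : Config V d, margin d p M x * F x)
            - ∑ x : Config V d, margin d q M x * F x := by
          rw [← Finset.sum_sub_distrib]
          refine Finset.sum_congr rfl fun x _ => ?_; ring
      _ = (∏ v ∈ Mᶜ, ((d v + 2 : ℕ) : ℝ)) * ∑ y : Config V d, (p y - q y) * F y := by
          rw [h1, h2, ← mul_sub, ← Finset.sum_sub_distrib]
          congr 1
          refine Finset.sum_congr rfl fun y _ => ?_; ring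
      _ = 0 := by rw [hzero, mul_zero]
  funext x
  have hterm : ∀ z : Config V d, 0 ≤ (margin d p M z - margin d q M z) * F z := fun z =>
    kl_term_nonneg (margin_pos p hppos M z) (margin_pos q hqpos M z)
  have hall := (Finset.sum_eq_zero_iff_of_nonneg (fun z _ => hterm z)).1 hpair x (mem_univ x)
  exact kl_term_eq (margin_pos p hppos M x) (margin_pos q hqpos M x) hall

end AuxFourier

namespace ADMG

variable (G : ADMG V)

lemma mem_anc {A : Finset V} {w : V} :
    w ∈ G.anc A ↔ ∃ a ∈ A, Relation.ReflTransGen G.dir w a := by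
  simp [ADMG.anc]

lemma subset_anc (A : Finset V) : A ⊆ G.anc A :=
  fun a ha => (G.mem_anc).2 ⟨a, ha, Relation.ReflTransGen.refl⟩

lemma anc_anc (A : Finset V) : G.anc (G.anc A) = G.anc A := by
  apply Finset.Subset.antisymm
  · intro w hw
    obtain ⟨a, ha, hr⟩ := (G.mem_anc).1 hw
    obtain ⟨a', ha', hr'⟩ := (G.mem_anc).1 ha
    exact (G.mem_anc).2 ⟨a', ha', hr.trans hr'⟩
  · exact G.subset_anc _

lemma mem_pa {A : Finset V} {w : V} : w ∈ G.pa A ↔ ∃ a ∈ A, G.dir w a := by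
  simp [ADMG.pa]

lemma mem_dec {A : Finset V} {w : V} :
    w ∈ G.dec A ↔ ∃ a ∈ A, Relation.ReflTransGen G.dir a w := by
  simp [ADMG.dec]

lemma mem_barren {A : Finset V} {v : V} :
    v ∈ G.barren A ↔ v ∈ A ∧ ∀ w ∈ A, Relation.ReflTransGen G.dir v w → w = v := by
  unfold ADMG.barren
  rw [Finset.mem_filter]
  constructor
  · rintro ⟨hvA, hd⟩
    refine ⟨hvA, fun w hw hr => ?_⟩
    have hmem : w ∈ G.dec {v} ∩ A := Finset.mem_inter.2
      ⟨(G.mem_dec).2 ⟨v, Finset.mem_singleton_self v, hr⟩, hw⟩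
    rw [hd] at hmem
    exact Finset.mem_singleton.1 hmem
  · rintro ⟨hvA, hmax⟩
    refine ⟨hvA, ?_⟩
    ext w
    rw [Finset.mem_inter, Finset.mem_singleton, G.mem_dec]
    constructor
    · rintro ⟨⟨a, ha, hr⟩, hwA⟩
      rw [Finset.mem_singleton] at ha
      subst ha
      exact hmax w hwA hr
    · rintro rfl
      exact ⟨⟨_, Finset.mem_singleton_self _, Relation.ReflTransGen.refl⟩, hvA⟩

lemma mem_disIn {S A : Finset V} {w : V} :
    w ∈ G.disIn S A ↔ ∃ a ∈ A, a ∈ S ∧ w ∈ S ∧ Relation.ReflTransGen (G.biStep S) a w := by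
  simp [ADMG.disIn]

end ADMG

lemma transGen_trans_rtg {α : Type*} {r : α → α → Prop} {a b c : α}
    (h : Relation.TransGen r a b) (h' : Relation.ReflTransGen r b c) :
    Relation.TransGen r a c := by
  induction h' with
  | refl => exact h
  | tail _ hstep ih => exact ih.tail hstep

lemma rtg_ne_transGen {α : Type*} {r : α → α → Prop} {a b : α}
    (h : Relation.ReflTransGen r a b) (hne : a ≠ b) : Relation.TransGen r a b := by
  rcases h.cases_head with rfl | ⟨c, hc, hr⟩
  · exact absurd rfl hne
  · exact Relation.TransGen.head' hc hr

namespace ADMG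

lemma exists_barren (G : ADMG V) {A : Finset V} :
    ∀ a ∈ A, ∃ b ∈ G.barren A, Relation.ReflTransGen G.dir a b := by
  classical
  suffices h : ∀ n : ℕ, ∀ a ∈ A,
      (A.filter fun w => Relation.ReflTransGen G.dir a w).card ≤ n →
      ∃ b ∈ G.barren A, Relation.ReflTransGen G.dir a b by
    exact fun a ha => h _ a ha le_rfl
  intro n
  induction n with
  | zero =>
    intro a ha hcard
    exfalso
    have hmem : a ∈ A.filter fun w => Relation.ReflTransGen G.dir a w :=
      Finset.mem_filter.2 ⟨ha, Relation.ReflTransGen.refl⟩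
    have := Finset.card_pos.2 ⟨a, hmem⟩
    omega
  | succ n ih =>
    intro a ha hcard
    by_cases hb : ∀ w ∈ A, Relation.ReflTransGen G.dir a w → w = a
    · exact ⟨a, (G.mem_barren).2 ⟨ha, hb⟩, Relation.ReflTransGen.refl⟩
    · push_neg at hb
      obtain ⟨w, hwA, hrtg, hne⟩ := hb
      have htg : Relation.TransGen G.dir a w := rtg_ne_transGen hrtg (Ne.symm hne)
      have hsub : (A.filter fun u => Relation.ReflTransGen G.dir w u)
          ⊆ A.filter fun u => Relation.ReflTransGen G.dir a u := by
        intro u hu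
        rw [Finset.mem_filter] at hu ⊢
        exact ⟨hu.1, hrtg.trans hu.2⟩
      have hnotmem : a ∉ A.filter fun u => Relation.ReflTransGen G.dir w u := by
        rw [Finset.mem_filter]
        rintro ⟨-, hwa⟩
        exact G.acyclic a (transGen_trans_rtg htg hwa)
      have hlt : (A.filter fun u => Relation.ReflTransGen G.dir w u).card <
          (A.filter fun u => Relation.ReflTransGen G.dir a u).card :=
        Finset.card_lt_card ⟨hsub, fun hsup => hnotmem
          (hsup (Finset.mem_filter.2 ⟨ha, Relation.ReflTransGen.refl⟩))⟩
      obtain ⟨bb, hbb, hr⟩ := ih w hwA (by omega)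
      exact ⟨bb, hbb, hrtg.trans hr⟩

end ADMG

lemma olm_msep (G : ADMG V) (A : Finset V) (hA : G.anc A ⊆ A) {b : V} (hb : b ∈ G.barren A) :
    MSep G {b} (A \ (G.disIn A {b} ∪ G.pa (G.disIn A {b})))
      ((G.disIn A {b} ∪ G.pa (G.disIn A {b})) \ {b}) := by
  classical
  set D : Finset V := G.disIn A {b} with hDdef
  set M : Finset V := D ∪ G.pa D with hMdef
  set C : Finset V := M \ {b} with hCdef
  obtain ⟨hbA, hbmax⟩ := (G.mem_barren).1 hb
  have hDA : D ⊆ A := by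
    intro u hu; obtain ⟨a, _, _, huA, _⟩ := (G.mem_disIn).1 hu; exact huA
  have hbD : b ∈ D := (G.mem_disIn).2
    ⟨b, Finset.mem_singleton_self b, hbA, hbA, Relation.ReflTransGen.refl⟩
  have hpaA : G.pa D ⊆ A := by
    intro u hu
    obtain ⟨a, haD, hdir⟩ := (G.mem_pa).1 hu
    exact hA ((G.mem_anc).2 ⟨a, hDA haD, Relation.ReflTransGen.single hdir⟩)
  have hMA : M ⊆ A := Finset.union_subset hDA hpaA
  have hCA : C ⊆ A := fun u hu => hMA (Finset.mem_sdiff.1 hu).1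
  have hancC : G.anc C ⊆ A := by
    intro u hu
    obtain ⟨cc, hcc, hr⟩ := (G.mem_anc).1 hu
    exact hA ((G.mem_anc).2 ⟨cc, hCA hcc, hr⟩)
  have hDstep : ∀ u u', u ∈ D → u' ∈ A → G.bi u u' → u' ∈ D := by
    intro u u' hu hu'A hbi
    obtain ⟨a, ha, haA, huA, hr⟩ := (G.mem_disIn).1 hu
    rw [Finset.mem_singleton] at ha; subst ha
    exact (G.mem_disIn).2 ⟨a, Finset.mem_singleton_self a, haA, hu'A,
      hr.tail ⟨huA, hu'A, hbi⟩⟩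
  intro a ha y hy w
  rw [Finset.mem_singleton] at ha
  subst ha
  obtain ⟨hyA, hyM⟩ := Finset.mem_sdiff.1 hy
  by_contra hnb
  have hno : ∀ (i : ℕ) (h : i + 1 < w.n),
      (¬ w.colliderAt i h → w.f ⟨i + 1, by omega⟩ ∉ C) ∧
      (w.colliderAt i h → w.f ⟨i + 1, by omega⟩ ∈ G.anc C) := by
    intro i h
    constructor
    · intro hcol hmem
      exact hnb ⟨i, h, Or.inl ⟨hcol, hmem⟩⟩
    · intro hcol
      by_contra hmem
      exact hnb ⟨i, h, Or.inr ⟨hcol, hmem⟩⟩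
  have ffix : ∀ (j k : ℕ) (hj : j < w.n + 1) (hk : k < w.n + 1), j = k →
      w.f ⟨j, hj⟩ = w.f ⟨k, hk⟩ := by
    intro j k hj hk h; subst h; rfl
  have efix : ∀ (j k : ℕ) (hj : j < w.n) (hk : k < w.n), j = k →
      w.e ⟨j, hj⟩ = w.e ⟨k, hk⟩ := by
    intro j k hj hk h; subst h; rfl
  have hinj : ∀ (i j : ℕ) (hi : i < w.n + 1) (hj : j < w.n + 1),
      w.f ⟨i, hi⟩ = w.f ⟨j, hj⟩ → i = j := by
    intro i j hi hj h
    exact congrArg Fin.val (w.inj h)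
  have hf0 : w.f ⟨0, Nat.succ_pos w.n⟩ = a := by
    have h0 : (⟨0, Nat.succ_pos w.n⟩ : Fin (w.n + 1)) = 0 := by
      apply Fin.ext; simp
    rw [h0]; exact w.first
  have hok : ∀ (j : ℕ) (hj : j < w.n),
      edgeOK G (w.e ⟨j, hj⟩) (w.f ⟨j, by omega⟩) (w.f ⟨j + 1, by omega⟩) :=
    fun j hj => w.ok ⟨j, hj⟩
  have hnoc : ∀ (j : ℕ) (h1 : 1 ≤ j) (h2 : j < w.n),
      (¬ w.colliderAt (j - 1) (by omega) → w.f ⟨j, by omega⟩ ∉ C) ∧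
      (w.colliderAt (j - 1) (by omega) → w.f ⟨j, by omega⟩ ∈ G.anc C) := by
    intro j h1 h2
    have h := hno (j - 1) (by omega)
    have heq : w.f ⟨j - 1 + 1, by omega⟩ = w.f ⟨j, by omega⟩ := ffix _ _ _ _ (by omega)
    rw [heq] at h
    exact h
  have hcoll_iff : ∀ (j : ℕ) (h1 : 1 ≤ j) (h2 : j < w.n),
      w.colliderAt (j - 1) (by omega) ↔
        (arrowAtRight (w.e ⟨j - 1, by omega⟩) ∧ arrowAtLeft (w.e ⟨j, h2⟩)) := by
    intro j h1 h2
    unfold GPath.colliderAt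
    rw [efix (j - 1 + 1) j (by omega) h2 (by omega)]
  have escape : ∀ (t j : ℕ) (hjt : j + t = w.n) (hj1 : 1 ≤ j),
      w.f ⟨j, by omega⟩ ∉ A → arrowAtRight (w.e ⟨j - 1, by omega⟩) → False := by
    intro t
    induction t with
    | zero =>
      intro j hjt hj1 hfA _
      apply hfA
      have hfy : w.f ⟨j, by omega⟩ = y := (ffix _ _ _ _ (by omega)).trans w.last
      rw [hfy]; exact hyA
    | succ t ih =>
      intro j hjt hj1 hfA har
      have hjn : j < w.n := by omega
      have hcol : ¬ w.colliderAt (j - 1) (by omega) := by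
        intro hc
        exact hfA (hancC ((hnoc j hj1 hjn).2 hc))
      have hnotleft : ¬ arrowAtLeft (w.e ⟨j, hjn⟩) := by
        intro hl
        exact hcol ((hcoll_iff j hj1 hjn).2 ⟨har, hl⟩)
      have hej : w.e ⟨j, hjn⟩ = EdgeType.toRight := by
        cases he : w.e ⟨j, hjn⟩ with
        | toRight => rfl
        | toLeft => rw [he] at hnotleft; exact absurd trivial hnotleft
        | biE => rw [he] at hnotleft; exact absurd trivial hnotleft
      have hdir : G.dir (w.f ⟨j, by omega⟩) (w.f ⟨j + 1, by omega⟩) := by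
        have h := hok j hjn; rw [hej] at h; exact h
      have hf1A : w.f ⟨j + 1, by omega⟩ ∉ A := by
        intro hmem
        exact hfA (hA ((G.mem_anc).2 ⟨_, hmem, Relation.ReflTransGen.single hdir⟩))
      apply ih (j + 1) (by omega) (by omega) hf1A
      rw [efix (j + 1 - 1) j (by omega) hjn (by omega), hej]
      trivial
  have main : ∀ (t j : ℕ) (hjt : j + t = w.n) (hj1 : 1 ≤ j),
      (w.f ⟨j, by omega⟩ ∈ D ∨
        (w.f ⟨j, by omega⟩ ∈ G.pa D ∧ w.e ⟨j - 1, by omega⟩ = EdgeType.toLeft)) →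
      False := by
    intro t
    induction t with
    | zero =>
      intro j hjt hj1 hyp
      have hfy : w.f ⟨j, by omega⟩ = y := (ffix _ _ _ _ (by omega)).trans w.last
      apply hyM
      rw [hfy] at hyp
      rcases hyp with h | h
      · exact Finset.mem_union_left _ h
      · exact Finset.mem_union_right _ h.1
    | succ t ih =>
      intro j hjt hj1 hyp
      have hjn : j < w.n := by omega
      have hfb : w.f ⟨j, by omega⟩ ≠ a := by
        intro hfeq
        have h0 : j = 0 := hinj j 0 (by omega) (by omega) (hfeq.trans hf0.symm)
        omega
      rcases hyp with hD' | ⟨hpa', hleft⟩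
      · have hfC : w.f ⟨j, by omega⟩ ∈ C := Finset.mem_sdiff.2
          ⟨Finset.mem_union_left _ hD', by simpa using hfb⟩
        have hcol : w.colliderAt (j - 1) (by omega) := by
          by_contra hc
          exact ((hnoc j hj1 hjn).1 hc) hfC
        have hal : arrowAtLeft (w.e ⟨j, hjn⟩) := ((hcoll_iff j hj1 hjn).1 hcol).2
        cases he : w.e ⟨j, hjn⟩ with
        | toRight => rw [he] at hal; exact hal
        | toLeft =>
          have hdir : G.dir (w.f ⟨j + 1, by omega⟩) (w.f ⟨j, by omega⟩) := by
            have h := hok j hjn; rw [he] at h; exact h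
          apply ih (j + 1) (by omega) (by omega)
          right
          refine ⟨(G.mem_pa).2 ⟨_, hD', hdir⟩, ?_⟩
          rw [efix (j + 1 - 1) j (by omega) hjn (by omega)]
          exact he
        | biE =>
          have hbi : G.bi (w.f ⟨j, by omega⟩) (w.f ⟨j + 1, by omega⟩) := by
            have h := hok j hjn; rw [he] at h; exact h
          by_cases hmem : w.f ⟨j + 1, by omega⟩ ∈ A
          · apply ih (j + 1) (by omega) (by omega)
            left
            exact hDstep _ _ hD' hmem hbi
          · apply escape t (j + 1) (by omega) (by omega) hmem
            rw [efix (j + 1 - 1) j (by omega) hjn (by omega), he]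
            trivial
      · have hncol : ¬ w.colliderAt (j - 1) (by omega) := by
          intro hc
          have har := ((hcoll_iff j hj1 hjn).1 hc).1
          rw [hleft] at har
          exact har
        apply (hnoc j hj1 hjn).1 hncol
        exact Finset.mem_sdiff.2 ⟨Finset.mem_union_right _ hpa', by simpa using hfb⟩
  rcases Nat.eq_zero_or_pos w.n with hn0 | hn1
  · apply hyM
    have hba : a = y := hf0.symm.trans ((ffix 0 w.n (by omega) (by omega) (by omega)).trans w.last)
    rw [← hba]
    exact Finset.mem_union_left _ hbD
  · cases he : w.e ⟨0, hn1⟩ with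
    | toRight =>
      have hdir : G.dir a (w.f ⟨1, by omega⟩) := by
        have h := hok 0 hn1; rw [he] at h; rw [hf0] at h; exact h
      have hf1A : w.f ⟨1, by omega⟩ ∉ A := by
        intro hmem
        have heq : w.f ⟨1, by omega⟩ = a := hbmax _ hmem (Relation.ReflTransGen.single hdir)
        have h10 : (1 : ℕ) = 0 := hinj 1 0 (by omega) (by omega) (heq.trans hf0.symm)
        omega
      apply escape (w.n - 1) 1 (by omega) (by omega) hf1A
      rw [efix (1 - 1) 0 (by omega) hn1 (by omega), he]
      trivial
    | toLeft =>
      have hdir : G.dir (w.f ⟨1, by omega⟩) a := by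
        have h := hok 0 hn1; rw [he] at h; rw [hf0] at h; exact h
      apply main (w.n - 1) 1 (by omega) (by omega)
      right
      refine ⟨(G.mem_pa).2 ⟨a, hbD, hdir⟩, ?_⟩
      rw [efix (1 - 1) 0 (by omega) hn1 (by omega)]
      exact he
    | biE =>
      have hbi : G.bi a (w.f ⟨1, by omega⟩) := by
        have h := hok 0 hn1; rw [he] at h; rw [hf0] at h; exact h
      by_cases hmem : w.f ⟨1, by omega⟩ ∈ A
      · apply main (w.n - 1) 1 (by omega) (by omega)
        left
        exact hDstep a _ hbD hmem hbi
      · apply escape (w.n - 1) 1 (by omega) (by omega) hmem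
        rw [efix (1 - 1) 0 (by omega) hn1 (by omega), he]
        trivial

lemma anc_erase (G : ADMG V) (A : Finset V) (hA : G.anc A ⊆ A) {h : V}
    (hh : h ∈ G.barren A) {L : Finset V} (hLA : L ⊆ A) (hhL : h ∉ L) :
    G.anc L ⊆ A.erase h := by
  intro u hu
  obtain ⟨l, hl, hr⟩ := (G.mem_anc).1 hu
  have huA : u ∈ A := hA ((G.mem_anc).2 ⟨l, hLA hl, hr⟩)
  rw [Finset.mem_erase]
  refine ⟨?_, huA⟩
  rintro rfl
  exact hhL (((G.mem_barren).1 hh).2 l (hLA hl) hr ▸ hl)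

lemma head_case (G : ADMG V) (A : Finset V) (hA : G.anc A ⊆ A) {b : V}
    (hb : b ∈ G.barren A)
    (hbar : G.barren A ⊆ G.disIn A {b} ∪ G.pa (G.disIn A {b})) :
    G.IsHead (G.barren A) ∧
      G.barren A ∪ G.tail (G.barren A) = G.disIn A {b} ∪ G.pa (G.disIn A {b}) := by
  classical
  set H := G.barren A with hHdef
  set D := G.disIn A {b} with hDdef
  have hbA : b ∈ A := ((G.mem_barren).1 hb).1
  have hHA : H ⊆ A := fun v hv => ((G.mem_barren).1 hv).1
  have hDA : D ⊆ A := by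
    intro u hu; obtain ⟨a, _, _, huA, _⟩ := (G.mem_disIn).1 hu; exact huA
  have hbD : b ∈ D := (G.mem_disIn).2
    ⟨b, Finset.mem_singleton_self b, hbA, hbA, Relation.ReflTransGen.refl⟩
  have hHD : H ⊆ D := by
    intro v hv
    rcases Finset.mem_union.1 (hbar hv) with h | h
    · exact h
    · exfalso
      obtain ⟨e, heD, hdir⟩ := (G.mem_pa).1 h
      have : e = v := ((G.mem_barren).1 hv).2 e (hDA heD) (Relation.ReflTransGen.single hdir)
      subst this
      exact G.acyclic e (Relation.TransGen.single hdir)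
  have hsymm : ∀ u u', Relation.ReflTransGen (G.biStep A) u u' →
      Relation.ReflTransGen (G.biStep A) u' u := by
    intro u u' hr
    induction hr with
    | refl => exact Relation.ReflTransGen.refl
    | tail _ hstep ih =>
      exact (Relation.ReflTransGen.single ⟨hstep.2.1, hstep.1, G.bi_symm hstep.2.2⟩).trans ih
  have hDconn : ∀ u ∈ D, Relation.ReflTransGen (G.biStep A) b u := by
    intro u hu
    obtain ⟨a, ha, _, _, hr⟩ := (G.mem_disIn).1 hu
    rw [Finset.mem_singleton] at ha; subst ha
    exact hr
  have hancH : G.anc H = A := by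
    apply Finset.Subset.antisymm
    · intro u hu
      obtain ⟨l, hl, hr⟩ := (G.mem_anc).1 hu
      exact hA ((G.mem_anc).2 ⟨l, hHA hl, hr⟩)
    · intro a ha
      obtain ⟨h, hh, hr⟩ := G.exists_barren a ha
      exact (G.mem_anc).2 ⟨h, hh, hr⟩
  have hconn : ∀ u ∈ H, ∀ u' ∈ H, Relation.ReflTransGen (G.biStep A) u u' := by
    intro u hu u' hu'
    exact (hsymm _ _ (hDconn u (hHD hu))).trans (hDconn u' (hHD hu'))
  have hbarren : G.IsBarren H := by
    unfold ADMG.IsBarren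
    ext v
    rw [G.mem_barren]
    constructor
    · rintro ⟨hv, -⟩; exact hv
    · intro hv
      exact ⟨hv, fun w hw hr => ((G.mem_barren).1 hv).2 w (hHA hw) hr⟩
  have hdisH : G.disIn A H = D := by
    ext u
    rw [G.mem_disIn]
    constructor
    · rintro ⟨h, hh, hhA, huA, hr⟩
      exact (G.mem_disIn).2 ⟨b, Finset.mem_singleton_self b, hbA, huA,
        (hDconn h (hHD hh)).trans hr⟩
    · intro hu
      exact ⟨b, hb, hbA, hDA hu, hDconn u hu⟩
  have htail : G.tail H = G.pa D ∪ (D \ H) := by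
    unfold ADMG.tail
    rw [hancH, hdisH]
  constructor
  · refine ⟨⟨b, hb⟩, hbarren, ?_⟩
    rw [hancH]
    exact hconn
  · rw [htail]
    ext x
    have hx : x ∈ H → x ∈ D := fun h => hHD h
    simp only [Finset.mem_union, Finset.mem_sdiff]
    tauto

/-- within the model defined by the global Markov property for `G`, the
ingenuous parameters (the MLL parameters `λ_L^{H∪T}` for heads `H` with tail `T` and
effects `H ⊆ L ⊆ H ∪ T`) determine the distribution. -/
theorem ingenuous_determines (G : ADMG V) (d : V → ℕ)
    (p q : Config V d → ℝ)
    (hppos : ∀ x, 0 < p x) (hpsum : ∑ x, p x = 1) (hpGM : GlobalMarkov G d p)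
    (hqpos : ∀ x, 0 < q x) (hqsum : ∑ x, q x = 1) (hqGM : GlobalMarkov G d q)
    (hagree : ∀ H : Finset V, G.IsHead H →
      ∀ L : Finset V, H ⊆ L → L ⊆ H ∪ G.tail H →
        ∀ x : Config V d,
          mll d p L (H ∪ G.tail H) x = mll d q L (H ∪ G.tail H) x) :
    p = q := by
  classical
  have key : ∀ n : ℕ, ∀ W : Finset V, (G.anc W).card ≤ n →
      margin d p W = margin d q W := by
    intro n
    induction n using Nat.strong_induction_on with
    | _ n ih =>
      intro W hW
      have hAanc : G.anc (G.anc W) ⊆ G.anc W := by rw [G.anc_anc]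
      set A := G.anc W with hAdef
      have hQA : margin d p A = margin d q A := by
        rcases Finset.eq_empty_or_nonempty A with hAe | ⟨a0, ha0⟩
        · funext x
          rw [hAe, margin_empty, margin_empty, hpsum, hqsum]
        · obtain ⟨b, hbb, -⟩ := G.exists_barren a0 ha0
          set D := G.disIn A {b} with hDdef
          set M := D ∪ G.pa D with hMdef
          have hbA : b ∈ A := ((G.mem_barren).1 hbb).1
          have hbmax := ((G.mem_barren).1 hbb).2
          have hDA : D ⊆ A := by
            intro u hu; obtain ⟨a, _, _, huA, _⟩ := (G.mem_disIn).1 hu; exact huA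
          have hbD : b ∈ D := (G.mem_disIn).2
            ⟨b, Finset.mem_singleton_self b, hbA, hbA, Relation.ReflTransGen.refl⟩
          have hpaA : G.pa D ⊆ A := by
            intro u hu
            obtain ⟨a, haD, hdir⟩ := (G.mem_pa).1 hu
            exact hAanc ((G.mem_anc).2 ⟨a, hDA haD, Relation.ReflTransGen.single hdir⟩)
          have hMA : M ⊆ A := Finset.union_subset hDA hpaA
          have hbM : b ∈ M := Finset.mem_union_left _ hbD
          have hcardA : A.card ≤ n := hW
          have hQM : margin d p M = margin d q M := by
            by_cases hbar : G.barren A ⊆ M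
            · obtain ⟨hhead, hunion⟩ := head_case G A hAanc hbb hbar
              apply interval_step p q hppos hqpos (G.barren A) M
              · intro L hHL hLM x
                have hmm := hagree (G.barren A) hhead L hHL (by rw [hunion]; exact hLM) x
                rw [hunion] at hmm
                exact hmm
              · intro L hLM hHL
                obtain ⟨h, hhH, hhL⟩ := Finset.not_subset.1 hHL
                have hLA : L ⊆ A := hLM.trans hMA
                have hsub : G.anc L ⊆ A.erase h := anc_erase G A hAanc hhH hLA hhL
                have hcard : (G.anc L).card < n :=
                  lt_of_le_of_lt (Finset.card_le_card hsub)
                    (lt_of_lt_of_le (Finset.card_erase_lt_of_mem (((G.mem_barren).1 hhH).1))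
                      hcardA)
                exact ih _ hcard L le_rfl
            · obtain ⟨c, hcH, hcM⟩ := Finset.not_subset.1 hbar
              have hsub : G.anc M ⊆ A.erase c := anc_erase G A hAanc hcH hMA hcM
              have hcard : (G.anc M).card < n :=
                lt_of_le_of_lt (Finset.card_le_card hsub)
                  (lt_of_lt_of_le (Finset.card_erase_lt_of_mem (((G.mem_barren).1 hcH).1))
                    hcardA)
              exact ih _ hcard M le_rfl
          have hQMb : margin d p (M \ {b}) = margin d q (M \ {b}) := by
            have hsub : G.anc (M \ {b}) ⊆ A.erase b :=
              anc_erase G A hAanc hbb (fun x hx => hMA (Finset.mem_sdiff.1 hx).1) (by simp)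
            have hcard : (G.anc (M \ {b})).card < n :=
              lt_of_le_of_lt (Finset.card_le_card hsub)
                (lt_of_lt_of_le (Finset.card_erase_lt_of_mem hbA) hcardA)
            exact ih _ hcard _ le_rfl
          have hQAb : margin d p (A \ {b}) = margin d q (A \ {b}) := by
            have hsub : G.anc (A \ {b}) ⊆ A.erase b :=
              anc_erase G A hAanc hbb (fun x hx => (Finset.mem_sdiff.1 hx).1) (by simp)
            have hcard : (G.anc (A \ {b})).card < n :=
              lt_of_le_of_lt (Finset.card_le_card hsub)
                (lt_of_lt_of_le (Finset.card_erase_lt_of_mem hbA) hcardA)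
            exact ih _ hcard _ le_rfl
          have hmsep := olm_msep G A hAanc hbb
          have hdisj1 : Disjoint ({b} : Finset V) (A \ M) := by
            rw [Finset.disjoint_left]
            intro x hx hx2
            rw [Finset.mem_singleton] at hx; subst hx
            exact (Finset.mem_sdiff.1 hx2).2 hbM
          have hdisj2 : Disjoint ({b} : Finset V) (M \ {b}) := by
            rw [Finset.disjoint_left]
            intro x hx hx2
            rw [Finset.mem_singleton] at hx; subst hx
            exact (Finset.mem_sdiff.1 hx2).2 (Finset.mem_singleton_self x)
          have hdisj3 : Disjoint (A \ M) (M \ {b}) := by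
            rw [Finset.disjoint_left]
            intro x hx hx2
            exact (Finset.mem_sdiff.1 hx).2 (Finset.mem_sdiff.1 hx2).1
          have hCIp := hpGM {b} (A \ M) (M \ {b}) hdisj1 hdisj2 hdisj3 hmsep
          have hCIq := hqGM {b} (A \ M) (M \ {b}) hdisj1 hdisj2 hdisj3 hmsep
          have hU1 : {b} ∪ (A \ M) ∪ (M \ {b}) = A := by
            ext x
            have h1 : x = b → x ∈ A := fun h => h ▸ hbA
            have h2 : x ∈ M → x ∈ A := fun h => hMA h
            have h3 : x = b → x ∈ M := fun h => h ▸ hbM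
            simp only [Finset.mem_union, Finset.mem_sdiff, Finset.mem_singleton]
            tauto
          have hU2 : {b} ∪ (M \ {b}) = M := by
            ext x
            have h3 : x = b → x ∈ M := fun h => h ▸ hbM
            simp only [Finset.mem_union, Finset.mem_sdiff, Finset.mem_singleton]
            tauto
          have hU3 : (A \ M) ∪ (M \ {b}) = A \ {b} := by
            ext x
            have h2 : x ∈ M → x ∈ A := fun h => hMA h
            have h3 : x = b → x ∈ M := fun h => h ▸ hbM
            simp only [Finset.mem_union, Finset.mem_sdiff, Finset.mem_singleton]
            tauto
          unfold CondIndep at hCIp hCIq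
          rw [hU1, hU2, hU3] at hCIp hCIq
          funext x
          have e1 : margin d p A x * margin d p (M \ {b}) x
              = margin d q A x * margin d p (M \ {b}) x := by
            calc margin d p A x * margin d p (M \ {b}) x
                = margin d p M x * margin d p (A \ {b}) x := hCIp x
              _ = margin d q M x * margin d q (A \ {b}) x := by rw [hQM, hQAb]
              _ = margin d q A x * margin d q (M \ {b}) x := (hCIq x).symm
              _ = margin d q A x * margin d p (M \ {b}) x := by rw [hQMb]
          exact mul_right_cancel₀ (ne_of_gt (margin_pos p hppos (M \ {b}) x)) e1
      funext x
      exact margin_subset p q (G.subset_anc W) hQA x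
  funext x
  have hu := congrFun (key (G.anc univ).card univ le_rfl) x
  rwa [margin_univ, margin_univ] at hu
end
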